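/- Let γ > 3/2. Then the double series ∑_{k∈ℤ\{0}} ∑_{j∈ℤ\{0}} |k|^{4-2γ+2a} / (|k|^γ · (|k|^γ + |j|^γ + |k-j|^γ)) converges for all sufficiently small a > 0. In particular it is bounded by a constant times ∑_{k≠0} |k|^{4 - (10/3)γ + 2a}, which is finite when 4 - (10/3)γ + 2a < -1. -/

import Mathlib

open scoped BigOperators

private lemma aux_sum_int (s : ℝ) (hs : s < -1) :
    Summable (fun k : ℤ => if k = 0 then 0 else |(k : ℝ)| ^ s) := by
  have h : Summable (fun k : ℤ => |(k : ℝ)| ^ s) := by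
    have := Real.summable_abs_int_rpow (b := -s) (by linarith)
    simpa using this
  refine h.congr fun k => ?_
  by_cases hk : k = 0
  · simp [hk, Real.zero_rpow (by linarith : s ≠ 0)]
  · simp [hk]

private lemma key_bound (γ a : ℝ) (hγ : 3/2 < γ) (k j : ℤ) :
    (if k = 0 ∨ j = 0 then (0:ℝ)
     else |(k:ℝ)| ^ (4 - 2*γ + 2*a) /
       (|(k:ℝ)|^γ * (|(k:ℝ)|^γ + |(j:ℝ)|^γ + |((k:ℝ)-(j:ℝ))|^γ)))
    ≤ (if k = 0 then 0 else |(k:ℝ)| ^ (4 - (10/3)*γ + 2*a)) *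
      ((if j = 0 then 0 else |(j:ℝ)| ^ (-(2*γ/3))) +
       (if k - j = 0 then 0 else |((k - j : ℤ):ℝ)| ^ (-(2*γ/3)))) := by
  have hγ0 : (0:ℝ) < γ := by linarith
  by_cases h0 : k = 0 ∨ j = 0
  · rw [if_pos h0]
    have h1 : (0:ℝ) ≤ (if k = 0 then 0 else |(k:ℝ)| ^ (4 - (10/3)*γ + 2*a)) := by
      split <;> positivity
    have h2 : (0:ℝ) ≤ ((if j = 0 then 0 else |(j:ℝ)| ^ (-(2*γ/3))) +
       (if k - j = 0 then 0 else |((k - j : ℤ):ℝ)| ^ (-(2*γ/3)))) := by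
      have : (0:ℝ) ≤ (if j = 0 then 0 else |(j:ℝ)| ^ (-(2*γ/3))) := by split <;> positivity
      have : (0:ℝ) ≤ (if k - j = 0 then 0 else |((k - j : ℤ):ℝ)| ^ (-(2*γ/3))) := by
        split <;> positivity
      positivity
    positivity
  · push_neg at h0
    obtain ⟨hk, hj⟩ := h0
    rw [if_neg (by tauto), if_neg hk, if_neg hj]
    set K := |(k:ℝ)| with hKdef
    set J := |(j:ℝ)| with hJdef
    have hK : 0 < K := abs_pos.mpr (by exact_mod_cast hk)
    have hJ : 0 < J := abs_pos.mpr (by exact_mod_cast hj)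
    set ν : ℝ := 4 - 2*γ + 2*a with hν
    set β : ℝ := 4 - (10/3)*γ + 2*a with hβ
    by_cases hkj : k - j = 0
    · -- j = k
      have hjk : j = k := by omega
      subst hjk
      rw [if_pos hkj]
      have hL0 : |(j:ℝ) - (j:ℝ)| ^ γ = 0 := by
        rw [sub_self, abs_zero, Real.zero_rpow (ne_of_gt hγ0)]
      rw [hL0]
      have e1 : K ^ β * (K ^ (-(2*γ/3)) + 0) = K ^ (ν - 2*γ) := by
        rw [add_zero, ← Real.rpow_add hK]
        congr 1
        rw [hβ, hν]; ring
      have e2 : K ^ (2*γ) = K ^ γ * K ^ γ := by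
        rw [← Real.rpow_add hK]; congr 1; ring
      have key : K ^ ν / (K ^ γ * (K ^ γ + K ^ γ + 0)) ≤ K ^ (ν - 2*γ) := by
        rw [Real.rpow_sub hK]
        apply div_le_div_of_nonneg_left (by positivity) (by positivity)
        rw [e2]
        nlinarith [Real.rpow_pos_of_pos hK γ]
      calc K ^ ν / (K ^ γ * (K ^ γ + K ^ γ + 0)) ≤ K ^ (ν - 2*γ) := key
        _ = K ^ β * (K ^ (-(2*γ/3)) + 0) := e1.symm
    · -- j ≠ k
      rw [if_neg hkj]
      set L := |(k:ℝ) - (j:ℝ)| with hLdef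
      have hL : 0 < L := by
        rw [hLdef, abs_pos, sub_ne_zero]
        exact_mod_cast (by omega : k ≠ j)
      have hcast : |((k - j : ℤ):ℝ)| = L := by push_cast; rfl
      rw [hcast]
      -- AM-GM three terms
      have hS : K ^ (γ/3) * J ^ (γ/3) * L ^ (γ/3) ≤ K ^ γ + J ^ γ + L ^ γ := by
        have h3 := Real.geom_mean_le_arith_mean3_weighted
          (by norm_num : (0:ℝ) ≤ 1/3) (by norm_num : (0:ℝ) ≤ 1/3) (by norm_num : (0:ℝ) ≤ 1/3)
          (Real.rpow_nonneg hK.le γ) (Real.rpow_nonneg hJ.le γ) (Real.rpow_nonneg hL.le γ)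
          (by norm_num)
        rw [← Real.rpow_mul hK.le, ← Real.rpow_mul hJ.le, ← Real.rpow_mul hL.le] at h3
        rw [show γ * (1/3) = γ/3 by ring] at h3
        nlinarith [Real.rpow_nonneg hK.le γ, Real.rpow_nonneg hJ.le γ, Real.rpow_nonneg hL.le γ]
      have hd1 : (0:ℝ) < K ^ γ * (K ^ (γ/3) * J ^ (γ/3) * L ^ (γ/3)) := by positivity
      have step1 : K ^ ν / (K ^ γ * (K ^ γ + J ^ γ + L ^ γ))
          ≤ K ^ ν / (K ^ γ * (K ^ (γ/3) * J ^ (γ/3) * L ^ (γ/3))) := by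
        apply div_le_div_of_nonneg_left (by positivity) hd1
        exact mul_le_mul_of_nonneg_left hS (by positivity)
      have step2 : K ^ ν / (K ^ γ * (K ^ (γ/3) * J ^ (γ/3) * L ^ (γ/3)))
          = K ^ β * (J ^ (-(γ/3)) * L ^ (-(γ/3))) := by
        rw [Real.rpow_neg hJ.le, Real.rpow_neg hL.le,
          show β = ν - γ - γ/3 by rw [hβ, hν]; ring,
          Real.rpow_sub hK, Real.rpow_sub hK]
        have h1 : K ^ γ ≠ 0 := (Real.rpow_pos_of_pos hK _).ne'
        have h2 : K ^ (γ/3) ≠ 0 := (Real.rpow_pos_of_pos hK _).ne'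
        have h3 : J ^ (γ/3) ≠ 0 := (Real.rpow_pos_of_pos hJ _).ne'
        have h4 : L ^ (γ/3) ≠ 0 := (Real.rpow_pos_of_pos hL _).ne'
        field_simp
      have step3 : J ^ (-(γ/3)) * L ^ (-(γ/3)) ≤ J ^ (-(2*γ/3)) + L ^ (-(2*γ/3)) := by
        have ej : J ^ (-(2*γ/3)) = (J ^ (-(γ/3)))^2 := by
          rw [← Real.rpow_natCast (J ^ (-(γ/3))) 2, ← Real.rpow_mul hJ.le]
          congr 1; push_cast; ring
        have el : L ^ (-(2*γ/3)) = (L ^ (-(γ/3)))^2 := by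
          rw [← Real.rpow_natCast (L ^ (-(γ/3))) 2, ← Real.rpow_mul hL.le]
          congr 1; push_cast; ring
        rw [ej, el]
        nlinarith [sq_nonneg (J ^ (-(γ/3)) - L ^ (-(γ/3))), Real.rpow_nonneg hJ.le (-(γ/3)),
          Real.rpow_nonneg hL.le (-(γ/3))]
      calc K ^ ν / (K ^ γ * (K ^ γ + J ^ γ + L ^ γ))
          ≤ K ^ β * (J ^ (-(γ/3)) * L ^ (-(γ/3))) := step1.trans_eq step2
        _ ≤ K ^ β * (J ^ (-(2*γ/3)) + L ^ (-(2*γ/3))) :=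
            mul_le_mul_of_nonneg_left step3 (by positivity)

theorem stmt_17 (γ : ℝ) (hγ : 3 / 2 < γ) :
    ∃ a₀ : ℝ, 0 < a₀ ∧ ∀ a : ℝ, 0 < a → a < a₀ →
      Summable (fun p : ℤ × ℤ =>
        if p.1 = 0 ∨ p.2 = 0 then 0
        else |(p.1 : ℝ)| ^ (4 - 2 * γ + 2 * a) /
          (|(p.1 : ℝ)| ^ γ * (|(p.1 : ℝ)| ^ γ + |(p.2 : ℝ)| ^ γ + |((p.1 : ℝ) - (p.2 : ℝ))| ^ γ))) ∧
      (4 - (10 / 3) * γ + 2 * a < -1 →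
        Summable (fun k : ℤ => if k = 0 then 0 else |(k : ℝ)| ^ (4 - (10 / 3) * γ + 2 * a)) ∧
        ∃ C : ℝ, 0 < C ∧
          (∑' p : ℤ × ℤ,
            if p.1 = 0 ∨ p.2 = 0 then 0
            else |(p.1 : ℝ)| ^ (4 - 2 * γ + 2 * a) /
              (|(p.1 : ℝ)| ^ γ * (|(p.1 : ℝ)| ^ γ + |(p.2 : ℝ)| ^ γ + |((p.1 : ℝ) - (p.2 : ℝ))| ^ γ)))
            ≤ C * ∑' k : ℤ, if k = 0 then 0 else |(k : ℝ)| ^ (4 - (10 / 3) * γ + 2 * a)) := by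
  refine ⟨((10/3)*γ - 5)/2, by linarith, ?_⟩
  intro a ha ha'
  have hβ : 4 - (10/3)*γ + 2*a < -1 := by linarith
  have hH' : -(2*γ/3) < -1 := by linarith
  set F : ℤ → ℝ := fun k => if k = 0 then 0 else |(k : ℝ)| ^ (4 - (10/3)*γ + 2*a) with hFdef
  set H : ℤ → ℝ := fun m => if m = 0 then 0 else |(m : ℝ)| ^ (-(2*γ/3)) with hHdef
  have hFs : Summable F := aux_sum_int _ hβ
  have hHs : Summable H := aux_sum_int _ hH'
  have hF0 : ∀ k, 0 ≤ F k := fun k => by rw [hFdef]; dsimp only; split <;> positivity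
  have hH0 : ∀ m, 0 ≤ H m := fun m => by rw [hHdef]; dsimp only; split <;> positivity
  have hM1 : Summable (fun p : ℤ × ℤ => F p.1 * H p.2) :=
    hFs.mul_of_nonneg hHs hF0 hH0
  let e : ℤ × ℤ ≃ ℤ × ℤ :=
    ⟨fun p => (p.1, p.1 - p.2), fun p => (p.1, p.1 - p.2),
      fun p => by simp, fun p => by simp⟩
  have hM2 : Summable (fun p : ℤ × ℤ => F p.1 * H (p.1 - p.2)) := by
    have := (e.summable_iff (f := fun p : ℤ × ℤ => F p.1 * H p.2)).mpr hM1
    exact this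
  have hMs : Summable (fun p : ℤ × ℤ => F p.1 * H p.2 + F p.1 * H (p.1 - p.2)) :=
    hM1.add hM2
  have hfM : ∀ p : ℤ × ℤ,
      (if p.1 = 0 ∨ p.2 = 0 then (0:ℝ)
        else |(p.1 : ℝ)| ^ (4 - 2 * γ + 2 * a) /
          (|(p.1 : ℝ)| ^ γ * (|(p.1 : ℝ)| ^ γ + |(p.2 : ℝ)| ^ γ + |((p.1 : ℝ) - (p.2 : ℝ))| ^ γ)))
      ≤ F p.1 * H p.2 + F p.1 * H (p.1 - p.2) := by
    intro p
    have := key_bound γ a hγ p.1 p.2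
    rw [hFdef, hHdef]
    dsimp only
    calc _ ≤ _ := this
      _ = _ := by ring
  have hf0 : ∀ p : ℤ × ℤ,
      (0:ℝ) ≤ (if p.1 = 0 ∨ p.2 = 0 then (0:ℝ)
        else |(p.1 : ℝ)| ^ (4 - 2 * γ + 2 * a) /
          (|(p.1 : ℝ)| ^ γ * (|(p.1 : ℝ)| ^ γ + |(p.2 : ℝ)| ^ γ + |((p.1 : ℝ) - (p.2 : ℝ))| ^ γ))) := by
    intro p
    split
    · exact le_rfl
    · positivity
  have hfs : Summable (fun p : ℤ × ℤ =>
      if p.1 = 0 ∨ p.2 = 0 then (0:ℝ)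
      else |(p.1 : ℝ)| ^ (4 - 2 * γ + 2 * a) /
        (|(p.1 : ℝ)| ^ γ * (|(p.1 : ℝ)| ^ γ + |(p.2 : ℝ)| ^ γ + |((p.1 : ℝ) - (p.2 : ℝ))| ^ γ))) :=
    Summable.of_nonneg_of_le hf0 hfM hMs
  refine ⟨hfs, fun _ => ⟨hFs, ?_⟩⟩
  have h1 : ∑' p : ℤ × ℤ, F p.1 * H p.2 = (∑' k, F k) * (∑' m, H m) := by
    rw [Summable.tsum_prod' hM1 (fun k => hHs.mul_left (F k))]
    simp_rw [tsum_mul_left]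
    rw [tsum_mul_right]
  have h2 : ∑' p : ℤ × ℤ, F p.1 * H (p.1 - p.2) = ∑' p : ℤ × ℤ, F p.1 * H p.2 := by
    have h := Equiv.tsum_eq e (fun p : ℤ × ℤ => F p.1 * H p.2)
    simpa [e] using h
  have hle : (∑' p : ℤ × ℤ,
      if p.1 = 0 ∨ p.2 = 0 then (0:ℝ)
      else |(p.1 : ℝ)| ^ (4 - 2 * γ + 2 * a) /
        (|(p.1 : ℝ)| ^ γ * (|(p.1 : ℝ)| ^ γ + |(p.2 : ℝ)| ^ γ + |((p.1 : ℝ) - (p.2 : ℝ))| ^ γ)))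
      ≤ (∑' k, F k) * (∑' m, H m) + (∑' k, F k) * (∑' m, H m) := by
    calc _ ≤ ∑' p : ℤ × ℤ, (F p.1 * H p.2 + F p.1 * H (p.1 - p.2)) :=
          Summable.tsum_le_tsum hfM hfs hMs
      _ = (∑' p : ℤ × ℤ, F p.1 * H p.2) + ∑' p : ℤ × ℤ, F p.1 * H (p.1 - p.2) :=
          Summable.tsum_add hM1 hM2
      _ = (∑' k, F k) * (∑' m, H m) + (∑' k, F k) * (∑' m, H m) := by rw [h1, h2, h1]
  refine ⟨2 * (∑' m, H m) + 1, ?_, ?_⟩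
  · have : 0 ≤ ∑' m, H m := tsum_nonneg hH0
    linarith
  · have hSF : 0 ≤ ∑' k, F k := tsum_nonneg hF0
    have hSH : 0 ≤ ∑' m, H m := tsum_nonneg hH0
    calc _ ≤ (∑' k, F k) * (∑' m, H m) + (∑' k, F k) * (∑' m, H m) := hle
      _ ≤ (2 * (∑' m, H m) + 1) * ∑' k, F k := by nlinarith
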